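/- Let H be a connected n-vertex {2,3}-uniform linear hypergraph containing no Berge cycle (of any length). Then the two-shadow ∂H has at most 3(n-1)/2 edges. -/

import Mathlib

/-- A Berge path of length `k` in a hypergraph `H`: `k+1` distinct vertices
`v 0, …, v k` and `k` distinct hyperedges `h 0, …, h (k-1)` of `H` with
`{v i, v (i+1)} ⊆ h i` for all `i`. -/
def HasBergePath {V : Type*} (H : Finset (Finset V)) (k : ℕ) : Prop :=
  ∃ (v : Fin (k + 1) → V) (h : Fin k → Finset V),
    Function.Injective v ∧ Function.Injective h ∧
    ∀ i : Fin k, h i ∈ H ∧ v i.castSucc ∈ h i ∧ v i.succ ∈ h i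

/-- A hypergraph is linear if any two distinct hyperedges share at most one vertex. -/
def IsLinear {V : Type*} [DecidableEq V] (H : Finset (Finset V)) : Prop :=
  ∀ e₁ ∈ H, ∀ e₂ ∈ H, e₁ ≠ e₂ → (e₁ ∩ e₂).card ≤ 1

/-- The number of edges of the two-shadow `∂H` of a hypergraph `H`, i.e. the number
of `2`-element vertex sets contained in some hyperedge of `H`. -/
def shadowEdgeCount {V : Type*} [DecidableEq V] (H : Finset (Finset V)) : ℕ :=
  (H.biUnion fun e => e.powersetCard 2).card
/-- A Berge cycle of length `ℓ ≥ 2` in a hypergraph `H`: `ℓ` distinct vertices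
`v 0, …, v (ℓ-1)` and `ℓ` distinct hyperedges `h 0, …, h (ℓ-1)` of `H` with
`{v i, v (i+1)} ⊆ h i` for all `i`, indices modulo `ℓ`. -/
def HasBergeCycle {V : Type*} (H : Finset (Finset V)) (ℓ : ℕ) : Prop :=
  ∃ (hℓ : 2 ≤ ℓ) (v : Fin ℓ → V) (h : Fin ℓ → Finset V),
    Function.Injective v ∧ Function.Injective h ∧
    ∀ i : Fin ℓ, h i ∈ H ∧ v i ∈ h i ∧
      v ⟨(i.val + 1) % ℓ, Nat.mod_lt _ (by omega)⟩ ∈ h i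

/-- The two-shadow of a hypergraph `H`, as a simple graph: `a` and `b` are adjacent
iff they are distinct and lie in a common hyperedge of `H`. -/
def shadowGraph {V : Type*} (H : Finset (Finset V)) : SimpleGraph V where
  Adj a b := a ≠ b ∧ ∃ e ∈ H, a ∈ e ∧ b ∈ e
  symm := ⟨fun a b hab => ⟨hab.1.symm, hab.2.imp fun e he => ⟨he.1, he.2.2, he.2.1⟩⟩⟩
  loopless := ⟨fun a ha => ha.1 rfl⟩


section BergeAux
open Finset SimpleGraph

/-- successor modulo `k` on `Fin k`. -/
def fsucc {k : ℕ} (i : Fin k) : Fin k := ⟨(i.val + 1) % k, Nat.mod_lt _ i.pos⟩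

lemma fin_succ_val {k : ℕ} [NeZero k] (i : Fin k) :
    ((i + 1 : Fin k)).val = (i.val + 1) % k := by
  rw [Fin.val_add, Fin.val_one']
  conv_rhs => rw [Nat.add_mod]
  rw [Nat.mod_eq_of_lt i.isLt]

lemma fsucc_eq {k : ℕ} [NeZero k] (i : Fin k) : fsucc i = i + 1 :=
  Fin.ext (by rw [fin_succ_val]; rfl)

lemma fsucc_ne {k : ℕ} (hk : 2 ≤ k) (i : Fin k) : i ≠ fsucc i := by
  intro h
  have hval := congrArg Fin.val h
  have hval' : i.val = (i.val + 1) % k := hval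
  have hi := i.isLt
  rcases Nat.lt_or_ge (i.val + 1) k with h1 | h1
  · rw [Nat.mod_eq_of_lt h1] at hval'; omega
  · have : i.val + 1 = k := by omega
    rw [this, Nat.mod_self] at hval'; omega

variable {V : Type*} [DecidableEq V]

/-- Merging lemma: a closed chain of distinct vertices whose hyperedge labels can
repeat only at cyclically adjacent positions (and never three times) yields a
genuine Berge cycle. -/
lemma berge_of_chain (H : Finset (Finset V)) :
    ∀ k, 2 ≤ k → ∀ (v : Fin k → V) (f : Fin k → Finset V),
    Function.Injective v →
    (∀ i, f i ∈ H ∧ v i ∈ f i ∧ v (fsucc i) ∈ f i) →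
    (∀ i j, i ≠ j → f i = f j → j = fsucc i ∨ i = fsucc j) →
    (∀ i j l, i ≠ j → j ≠ l → i ≠ l → f i = f j → f j = f l → False) →
    (¬ Function.Injective f → 3 ≤ k) →
    ∃ ℓ, HasBergeCycle H ℓ := by
  intro k
  induction k using Nat.strong_induction_on with
  | _ k ih =>
  intro hk2 v f hv hinc hadjd htrip hni
  haveI : NeZero k := ⟨by omega⟩
  by_cases hfinj : Function.Injective f
  · exact ⟨k, hk2, v, f, hv, hfinj, hinc⟩
  · have hk3 : 3 ≤ k := hni hfinj
    obtain ⟨m, rfl⟩ : ∃ m, k = m + 3 := ⟨k - 3, by omega⟩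
    obtain ⟨i0, j0, hfij, hij⟩ := Function.not_injective_iff.mp hfinj
    have hsx : ∀ i : Fin (m + 3), fsucc i = i + 1 := fun i => fsucc_eq i
    obtain ⟨t, ht⟩ : ∃ t : Fin (m + 3), f t = f (t + 1) := by
      rcases hadjd i0 j0 hij hfij with h | h
      · exact ⟨i0, by rw [← hsx, ← h]; exact hfij⟩
      · exact ⟨j0, by rw [← hsx, ← h]; exact hfij.symm⟩
    obtain ⟨c, hcdef⟩ : ∃ c : Fin (m + 3), c = t - ⟨m + 1, Nat.lt_succ_of_lt (Nat.lt_succ_self (m + 1))⟩ := ⟨_, rfl⟩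
    have hsucc21 : (⟨m + 1, Nat.lt_succ_of_lt (Nat.lt_succ_self (m + 1))⟩ : Fin (m + 3)) + 1 = ⟨m + 2, Nat.lt_succ_self (m + 2)⟩ := by
      apply Fin.ext
      rw [fin_succ_val]
      show (m + 1 + 1) % (m + 3) = m + 2
      exact Nat.mod_eq_of_lt (by omega)
    have hsucc10 : (⟨m + 2, Nat.lt_succ_self (m + 2)⟩ : Fin (m + 3)) + 1 = 0 := by
      apply Fin.ext
      rw [fin_succ_val]
      show (m + 2 + 1) % (m + 3) = 0
      exact Nat.mod_self _
    have E1 : (⟨m + 1, Nat.lt_succ_of_lt (Nat.lt_succ_self (m + 1))⟩ : Fin (m + 3)) + c = t := by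
      rw [hcdef]; exact add_sub_cancel _ t
    have E2 : (⟨m + 2, Nat.lt_succ_self (m + 2)⟩ : Fin (m + 3)) + c = t + 1 := by
      rw [← hsucc21, add_right_comm, E1]
    have hcancel : ∀ a b : Fin (m + 3), a + c = b + c → a = b :=
      fun a b h => add_right_cancel h
    have hδinj : Function.Injective (fun s : Fin (m + 2) => s.castSucc + c) := by
      intro a b hab
      exact Fin.castSucc_injective _ (hcancel _ _ hab)
    -- the shrunk chain
    have hv₂ : Function.Injective (fun s : Fin (m + 2) => v (s.castSucc + c)) :=
      fun a b hab => hδinj (hv hab)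
    have hinc₂ : ∀ s : Fin (m + 2),
        f (s.castSucc + c) ∈ H ∧ v (s.castSucc + c) ∈ f (s.castSucc + c) ∧
          v ((fsucc s).castSucc + c) ∈ f (s.castSucc + c) := by
      intro s
      refine ⟨(hinc _).1, (hinc _).2.1, ?_⟩
      rcases Nat.lt_or_ge (s.val + 1) (m + 2) with hs | hs
      · have h1 : (fsucc s).castSucc = s.castSucc + 1 := by
          apply Fin.ext
          have hl : ((fsucc s).castSucc).val = (s.val + 1) % (m + 2) := rfl
          rw [hl, fin_succ_val, Fin.coe_castSucc, Nat.mod_eq_of_lt hs,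
            Nat.mod_eq_of_lt (by omega)]
        have e : (fsucc s).castSucc + c = s.castSucc + c + 1 := by
          rw [h1]; exact add_right_comm _ _ _
        rw [e]
        have h2 := (hinc (s.castSucc + c)).2.2
        rwa [hsx] at h2
      · have hsval : s.val = m + 1 := by have := s.isLt; omega
        have h0 : (fsucc s).castSucc = (0 : Fin (m + 3)) := by
          apply Fin.ext
          have hl : ((fsucc s).castSucc).val = (s.val + 1) % (m + 2) := rfl
          rw [hl, hsval]
          exact Nat.mod_self _
        have hδs : s.castSucc = (⟨m + 1, Nat.lt_succ_of_lt (Nat.lt_succ_self (m + 1))⟩ : Fin (m + 3)) :=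
          Fin.ext (by rw [Fin.coe_castSucc, hsval])
        have key1 : (fsucc s).castSucc + c = c := by rw [h0]; exact zero_add c
        have key2 : s.castSucc + c = t := by rw [hδs]; exact E1
        have h2 := (hinc ((⟨m + 2, Nat.lt_succ_self (m + 2)⟩ : Fin (m + 3)) + c)).2.2
        have key4 : fsucc ((⟨m + 2, Nat.lt_succ_self (m + 2)⟩ : Fin (m + 3)) + c) = c := by
          rw [hsx]
          have e2 : (⟨m + 2, Nat.lt_succ_self (m + 2)⟩ : Fin (m + 3)) + c + 1
              = (⟨m + 2, Nat.lt_succ_self (m + 2)⟩ : Fin (m + 3)) + 1 + c := add_right_comm _ _ _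
          rw [e2, hsucc10]
          exact zero_add c
        rw [key4, E2, ← ht, ← key2] at h2
        rw [key1]
        exact h2
    have hadjd₂ : ∀ a b : Fin (m + 2), a ≠ b →
        f (a.castSucc + c) = f (b.castSucc + c) → b = fsucc a ∨ a = fsucc b := by
      intro a b hab h
      have hab' : a.castSucc + c ≠ b.castSucc + c := fun hh => hab (hδinj hh)
      rcases hadjd _ _ hab' h with h' | h'
      · left
        rw [hsx] at h'
        have e : a.castSucc + c + 1 = a.castSucc + 1 + c := add_right_comm _ _ _
        rw [e] at h'
        have h'' : b.castSucc = a.castSucc + 1 := hcancel _ _ h'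
        have hbv := congrArg Fin.val h''
        rw [Fin.coe_castSucc, fin_succ_val, Fin.coe_castSucc,
          Nat.mod_eq_of_lt (by have := a.isLt; omega)] at hbv
        apply Fin.ext
        have hr : (fsucc a).val = (a.val + 1) % (m + 2) := rfl
        rw [hr, Nat.mod_eq_of_lt (by have := b.isLt; omega)]
        exact hbv
      · right
        rw [hsx] at h'
        have e : b.castSucc + c + 1 = b.castSucc + 1 + c := add_right_comm _ _ _
        rw [e] at h'
        have h'' : a.castSucc = b.castSucc + 1 := hcancel _ _ h'
        have hav := congrArg Fin.val h''
        rw [Fin.coe_castSucc, fin_succ_val, Fin.coe_castSucc,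
          Nat.mod_eq_of_lt (by have := b.isLt; omega)] at hav
        apply Fin.ext
        have hr : (fsucc b).val = (b.val + 1) % (m + 2) := rfl
        rw [hr, Nat.mod_eq_of_lt (by have := a.isLt; omega)]
        exact hav
    have htrip₂ : ∀ a b l : Fin (m + 2), a ≠ b → b ≠ l → a ≠ l →
        f (a.castSucc + c) = f (b.castSucc + c) →
        f (b.castSucc + c) = f (l.castSucc + c) → False := by
      intro a b l h1 h2 h3 h4 h5
      exact htrip _ _ _ (fun hh => h1 (hδinj hh)) (fun hh => h2 (hδinj hh))
        (fun hh => h3 (hδinj hh)) h4 h5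
    have hni₂ : ¬ Function.Injective (fun s : Fin (m + 2) => f (s.castSucc + c)) →
        3 ≤ m + 2 := by
      intro hninj
      by_contra hm
      have hm0 : m = 0 := by omega
      obtain ⟨a, b, hfab, hne⟩ := Function.not_injective_iff.mp hninj
      have hvv : (a.val = 0 ∧ b.val = 1) ∨ (a.val = 1 ∧ b.val = 0) := by
        have h1 := a.isLt; have h2 := b.isLt
        have h3 : a.val ≠ b.val := fun hh => hne (Fin.ext hh)
        omega
      have hA : ∀ x : Fin (m + 2), x.val = 0 → x.castSucc = (0 : Fin (m + 3)) :=
        fun x hx => Fin.ext (by rw [Fin.coe_castSucc, hx]; rfl)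
      have hB : ∀ x : Fin (m + 2), x.val = 1 →
          x.castSucc = (⟨m + 1, Nat.lt_succ_of_lt (Nat.lt_succ_self (m + 1))⟩ : Fin (m + 3)) :=
        fun x hx => Fin.ext (by
          rw [Fin.coe_castSucc, hx]
          show (1 : ℕ) = m + 1
          omega)
      have h01 : f ((0 : Fin (m + 3)) + c)
          = f ((⟨m + 1, Nat.lt_succ_of_lt (Nat.lt_succ_self (m + 1))⟩ : Fin (m + 3)) + c) := by
        rcases hvv with ⟨ha, hb⟩ | ⟨ha, hb⟩
        · rw [← hA a ha, ← hB b hb]; exact hfab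
        · rw [← hA b hb, ← hB a ha]; exact hfab.symm
      have hz : (0 : Fin (m + 3)) + c = c := zero_add c
      rw [hz] at h01
      have hdup2 : f ((⟨m + 1, Nat.lt_succ_of_lt (Nat.lt_succ_self (m + 1))⟩ : Fin (m + 3)) + c)
          = f ((⟨m + 2, Nat.lt_succ_self (m + 2)⟩ : Fin (m + 3)) + c) := by
        rw [E1, E2]; exact ht
      have vM1 : ((⟨m + 1, Nat.lt_succ_of_lt (Nat.lt_succ_self (m + 1))⟩ : Fin (m + 3))).val = m + 1 := rfl
      have vM2 : ((⟨m + 2, Nat.lt_succ_self (m + 2)⟩ : Fin (m + 3))).val = m + 2 := rfl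
      refine htrip c _ _ ?_ ?_ ?_ h01 hdup2
      · intro hh
        have h' := hcancel 0 ⟨m + 1, Nat.lt_succ_of_lt (Nat.lt_succ_self (m + 1))⟩
          (by rw [hz]; exact hh)
        have hval := congrArg Fin.val h'
        rw [Fin.val_zero, vM1] at hval
        omega
      · intro hh
        have h' := hcancel _ _ hh
        have hval := congrArg Fin.val h'
        rw [vM1, vM2] at hval
        omega
      · intro hh
        have h' := hcancel 0 ⟨m + 2, Nat.lt_succ_self (m + 2)⟩ (by rw [hz]; exact hh)
        have hval := congrArg Fin.val h'
        rw [Fin.val_zero, vM2] at hval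
        omega
    exact ih (m + 2) (by omega) (by omega) _ _ hv₂ hinc₂ hadjd₂ htrip₂ hni₂


noncomputable def midv {V : Type*} [Nonempty V] (e : Finset V) : V :=
  if h : e.Nonempty then h.choose else Classical.arbitrary V

lemma midv_mem {V : Type*} [Nonempty V] {e : Finset V} (h : e.Nonempty) : midv e ∈ e := by
  rw [midv, dif_pos h]; exact h.choose_spec

/-- The skeleton graph: inside each hyperedge `e` of size 3 we keep only the two
pairs through `midv e`; hyperedges of size 2 give their pair. -/
def skel {V : Type*} [Nonempty V] (H : Finset (Finset V)) : SimpleGraph V where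
  Adj a b := a ≠ b ∧ ∃ e ∈ H, a ∈ e ∧ b ∈ e ∧ (e.card ≤ 2 ∨ midv e = a ∨ midv e = b)
  symm := by
    refine ⟨?_⟩
    rintro a b ⟨hne, e, he, ha, hb, hd⟩
    exact ⟨hne.symm, e, he, hb, ha, by tauto⟩
  loopless := ⟨fun a ha => ha.1 rfl⟩

lemma walk_getElem {V : Type*} {G : SimpleGraph V} :
    ∀ {u w : V} (p : G.Walk u w) (i : ℕ) (h : i < p.support.length),
      p.support[i] = p.getVert i := by
  intro u w p
  induction p with
  | nil =>
    intro i h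
    simp only [SimpleGraph.Walk.support_nil, List.length_singleton] at h
    have : i = 0 := by omega
    subst this
    rfl
  | cons h q ih =>
    intro i hi
    cases i with
    | zero => rfl
    | succ n =>
      have hn : n < q.support.length := by
        simp only [SimpleGraph.Walk.support_cons, List.length_cons] at hi
        omega
      simp only [SimpleGraph.Walk.support_cons, List.getElem_cons_succ,
        SimpleGraph.Walk.getVert_cons_succ]
      exact ih n hn

lemma cycle_getVert_inj {V : Type*} {G : SimpleGraph V} {u : V} {p : G.Walk u u}
    (hp : p.IsCycle) :
    ∀ i j, i < p.length → j < p.length → p.getVert i = p.getVert j → i = j := by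
  have hnd : p.support.tail.Nodup := ((SimpleGraph.Walk.isCycle_def p).mp hp).2.2
  have hlen : p.support.length = p.length + 1 := SimpleGraph.Walk.length_support p
  have htl : p.support.tail.length = p.length := by
    rw [List.length_tail, hlen]
    omega
  have hget : ∀ i (hi : i < p.support.tail.length), p.support.tail[i] = p.getVert (i + 1) := by
    intro i hi
    rw [List.getElem_tail]
    exact walk_getElem p (i + 1) (by rw [hlen]; omega)
  have key : ∀ i j, 1 ≤ i → i ≤ p.length → 1 ≤ j → j ≤ p.length →
      p.getVert i = p.getVert j → i = j := by
    intro i j h1 h2 h3 h4 heq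
    have hb1 : i - 1 < p.support.tail.length := by omega
    have hb2 : j - 1 < p.support.tail.length := by omega
    have e1 : p.support.tail[i - 1]'hb1 = p.getVert i := by
      rw [hget (i - 1) hb1]
      congr 1
      omega
    have e2 : p.support.tail[j - 1]'hb2 = p.getVert j := by
      rw [hget (j - 1) hb2]
      congr 1
      omega
    have := (hnd.getElem_inj_iff (hi := hb1) (hj := hb2)).mp
      (e1.trans (heq.trans e2.symm))
    omega
  have hlen3 := hp.three_le_length
  intro i j hi hj heq
  rcases Nat.eq_zero_or_pos i with rfl | hip
  · rcases Nat.eq_zero_or_pos j with rfl | hjp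
    · rfl
    · exfalso
      have h0 : p.getVert p.length = p.getVert j :=
        (p.getVert_length).trans ((p.getVert_zero).symm.trans heq)
      have := key p.length j (by omega) (le_refl _) hjp (by omega) h0
      omega
  · rcases Nat.eq_zero_or_pos j with rfl | hjp
    · exfalso
      have h0 : p.getVert i = p.getVert p.length :=
        (heq.trans (p.getVert_zero)).trans (p.getVert_length).symm
      have := key i p.length hip (by omega) (by omega) (le_refl _) h0
      omega
    · exact key i j hip (by omega) hjp (by omega) heq

lemma skel_acyclic {V : Type*} [DecidableEq V] [Nonempty V] (H : Finset (Finset V))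
    (hunif : ∀ e ∈ H, e.card = 2 ∨ e.card = 3)
    (hforb : ∀ ℓ : ℕ, ¬ HasBergeCycle H ℓ) : (skel H).IsAcyclic := by
  intro u p hp
  have hk3 : 3 ≤ p.length := hp.three_le_length
  haveI : NeZero p.length := ⟨by omega⟩
  have hvinj : Function.Injective (fun i : Fin p.length => p.getVert i.val) := by
    intro a b hab
    exact Fin.ext (cycle_getVert_inj hp _ _ a.isLt b.isLt hab)
  have hadj : ∀ i : Fin p.length, (skel H).Adj (p.getVert i.val) (p.getVert (fsucc i).val) := by
    intro i
    rcases Nat.lt_or_ge (i.val + 1) p.length with h | h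
    · have hval : (fsucc i).val = i.val + 1 := Nat.mod_eq_of_lt h
      rw [hval]
      exact SimpleGraph.Walk.adj_getVert_succ p (by omega)
    · have h1 : i.val + 1 = p.length := by have := i.isLt; omega
      have hv0 : (fsucc i).val = 0 := by
        show (i.val + 1) % p.length = 0
        rw [h1, Nat.mod_self]
      have hstep := SimpleGraph.Walk.adj_getVert_succ p (i := i.val) (by omega)
      rw [h1, SimpleGraph.Walk.getVert_length] at hstep
      rw [hv0, SimpleGraph.Walk.getVert_zero]
      exact hstep
  set v : Fin p.length → V := fun i => p.getVert i.val with hvdef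
  have hex : ∀ i : Fin p.length, ∃ e, e ∈ H ∧ v i ∈ e ∧ v (fsucc i) ∈ e ∧
      (e.card ≤ 2 ∨ midv e = v i ∨ midv e = v (fsucc i)) := by
    intro i
    obtain ⟨hne, e, he, h1, h2, h3⟩ := hadj i
    exact ⟨e, he, h1, h2, h3⟩
  choose f hfH hf1 hf2 hf3 using hex
  have hvne : ∀ i : Fin p.length, v i ≠ v (fsucc i) := fun i => (hadj i).1
  have hfs_inj : Function.Injective (fsucc : Fin p.length → Fin p.length) := by
    intro a b hab
    rw [fsucc_eq, fsucc_eq] at hab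
    exact add_right_cancel hab
  have hns : ∀ i : Fin p.length, i ≠ fsucc i := fun i => fsucc_ne (by omega) i
  have hcard2 : ∀ i j : Fin p.length, i ≠ j → f i = f j → (f i).card = 2 → False := by
    intro i j hij hfij hc2
    have hpair : ∀ t : Fin p.length, (f t).card = 2 → ({v t, v (fsucc t)} : Finset V) = f t := by
      intro t hc
      apply Finset.eq_of_subset_of_card_le
      · intro x hx
        rcases Finset.mem_insert.mp hx with rfl | hx'
        · exact hf1 t
        · rw [Finset.mem_singleton.mp hx']
          exact hf2 t
      · rw [hc, Finset.card_insert_of_notMem (by simp [hvne t]), Finset.card_singleton]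
    have e1 := hpair i hc2
    have e2 := hpair j (by rw [← hfij]; exact hc2)
    have heq : ({v i, v (fsucc i)} : Finset V) = {v j, v (fsucc j)} :=
      e1.trans (hfij.trans e2.symm)
    have hm1 : v i ∈ ({v j, v (fsucc j)} : Finset V) := by
      rw [← heq]; exact Finset.mem_insert_self _ _
    have hm2 : v (fsucc i) ∈ ({v j, v (fsucc j)} : Finset V) := by
      rw [← heq]
      exact Finset.mem_insert_of_mem (Finset.mem_singleton_self _)
    have hi' : i = j ∨ i = fsucc j := by
      rcases Finset.mem_insert.mp hm1 with h | h
      · exact Or.inl (hvinj h)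
      · exact Or.inr (hvinj (Finset.mem_singleton.mp h))
    have hi2' : fsucc i = j ∨ fsucc i = fsucc j := by
      rcases Finset.mem_insert.mp hm2 with h | h
      · exact Or.inl (hvinj h)
      · exact Or.inr (hvinj (Finset.mem_singleton.mp h))
    have hij1 : i = fsucc j := by
      rcases hi' with h | h
      · exact absurd h hij
      · exact h
    have hij2 : fsucc i = j := by
      rcases hi2' with h | h
      · exact h
      · exact absurd (hfs_inj h) hij
    -- i = fsucc (fsucc i) : contradiction mod k with k ≥ 3
    have hval1 : i.val = (j.val + 1) % p.length := congrArg Fin.val hij1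
    have hval2 : j.val = (i.val + 1) % p.length := (congrArg Fin.val hij2).symm
    have hik := i.isLt
    have hjk := j.isLt
    rcases Nat.lt_or_ge (i.val + 1) p.length with h | h
    · rw [Nat.mod_eq_of_lt h] at hval2
      rcases Nat.lt_or_ge (j.val + 1) p.length with h' | h'
      · rw [Nat.mod_eq_of_lt h'] at hval1
        omega
      · have : j.val + 1 = p.length := by omega
        rw [this, Nat.mod_self] at hval1
        omega
    · have : i.val + 1 = p.length := by omega
      rw [this, Nat.mod_self] at hval2
      have h' : j.val + 1 < p.length := by omega
      rw [Nat.mod_eq_of_lt h'] at hval1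
      omega
  have hmid : ∀ i : Fin p.length, (f i).card = 3 → midv (f i) = v i ∨ midv (f i) = v (fsucc i) := by
    intro i hc
    rcases hf3 i with h | h
    · omega
    · exact h
  have hadjd : ∀ i j : Fin p.length, i ≠ j → f i = f j → j = fsucc i ∨ i = fsucc j := by
    intro i j hij hfij
    rcases hunif (f i) (hfH i) with hc | hc
    · exact absurd (hcard2 i j hij hfij hc) not_false
    · have hd_i := hmid i hc
      have hd_j := hmid j (by rw [← hfij]; exact hc)
      rw [← hfij] at hd_j
      rcases hd_i with h1 | h1 <;> rcases hd_j with h2 | h2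
      · exact absurd (hvinj (h1.symm.trans h2)) hij
      · exact Or.inr (hvinj (h1.symm.trans h2))
      · exact Or.inl ((hvinj (h1.symm.trans h2)).symm)
      · exact absurd (hfs_inj (hvinj (h1.symm.trans h2))) hij
  have htrip : ∀ i j l : Fin p.length, i ≠ j → j ≠ l → i ≠ l → f i = f j → f j = f l → False := by
    intro i j l h1 h2 h3 h4 h5
    rcases hunif (f i) (hfH i) with hc | hc
    · exact hcard2 i j h1 h4 hc
    · have hd_i := hmid i hc
      have hd_j := hmid j (by rw [← h4]; exact hc)
      have hd_l := hmid l (by rw [← h5, ← h4]; exact hc)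
      rw [← h4] at hd_j
      rw [← h5, ← h4] at hd_l
      rcases hd_i with e1 | e1 <;> rcases hd_j with e2 | e2 <;> rcases hd_l with e3 | e3
      · exact h1 (hvinj (e1.symm.trans e2))
      · exact h1 (hvinj (e1.symm.trans e2))
      · exact h3 (hvinj (e1.symm.trans e3))
      · exact h2 (hfs_inj (hvinj (e2.symm.trans e3)))
      · exact h2 (hvinj (e2.symm.trans e3))
      · exact h3 (hfs_inj (hvinj (e1.symm.trans e3)))
      · exact h1 (hfs_inj (hvinj (e1.symm.trans e2)))
      · exact h1 (hfs_inj (hvinj (e1.symm.trans e2)))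
  obtain ⟨ℓ, hℓ⟩ := berge_of_chain H p.length (by omega) v f hvinj
    (fun i => ⟨hfH i, hf1 i, hf2 i⟩) hadjd htrip (fun _ => hk3)
  exact hforb ℓ hℓ

lemma skel_connected {V : Type*} [DecidableEq V] [Nonempty V] (H : Finset (Finset V))
    (hunif : ∀ e ∈ H, e.card = 2 ∨ e.card = 3)
    (hconn : (shadowGraph H).Connected) : (skel H).Connected := by
  have hstep : ∀ x y : V, (shadowGraph H).Adj x y → (skel H).Reachable x y := by
    intro x y hxy
    obtain ⟨hne, e, he, hx, hy⟩ := hxy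
    rcases hunif e he with hc | hc
    · exact SimpleGraph.Adj.reachable ⟨hne, e, he, hx, hy, Or.inl (by omega)⟩
    · by_cases hmx : midv e = x
      · exact SimpleGraph.Adj.reachable ⟨hne, e, he, hx, hy, Or.inr (Or.inl hmx)⟩
      · by_cases hmy : midv e = y
        · exact SimpleGraph.Adj.reachable ⟨hne, e, he, hx, hy, Or.inr (Or.inr hmy)⟩
        · have hmem : midv e ∈ e := midv_mem ⟨x, hx⟩
          have r1 : (skel H).Adj x (midv e) :=
            ⟨fun h => hmx h.symm, e, he, hx, hmem, Or.inr (Or.inr rfl)⟩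
          have r2 : (skel H).Adj (midv e) y :=
            ⟨hmy, e, he, hmem, hy, Or.inr (Or.inl rfl)⟩
          exact (SimpleGraph.Adj.reachable r1).trans (SimpleGraph.Adj.reachable r2)
  refine ⟨fun a b => ?_⟩
  obtain ⟨w⟩ := hconn.preconnected a b
  induction w with
  | nil => exact SimpleGraph.Reachable.refl _
  | cons h q ih => exact (hstep _ _ h).trans ih

/-- The two shadow pairs (as `Sym2`) kept by the skeleton inside a hyperedge. -/
noncomputable def pairsOf {V : Type*} [DecidableEq V] [Nonempty V] (e : Finset V) :
    Finset (Sym2 V) :=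
  ((e ×ˢ e).filter fun q => q.1 ≠ q.2 ∧ (e.card ≤ 2 ∨ midv e = q.1 ∨ midv e = q.2)).image
    fun q => s(q.1, q.2)

lemma mem_pairsOf {V : Type*} [DecidableEq V] [Nonempty V] {e : Finset V} {z : Sym2 V} :
    z ∈ pairsOf e ↔ ∃ a b : V, a ∈ e ∧ b ∈ e ∧ a ≠ b ∧
      (e.card ≤ 2 ∨ midv e = a ∨ midv e = b) ∧ s(a, b) = z := by
  constructor
  · intro h
    obtain ⟨q, hq, hz⟩ := Finset.mem_image.mp h
    obtain ⟨hqm, hne, hd⟩ := Finset.mem_filter.mp hq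
    obtain ⟨h1, h2⟩ := Finset.mem_product.mp hqm
    exact ⟨q.1, q.2, h1, h2, hne, hd, hz⟩
  · rintro ⟨a, b, h1, h2, hne, hd, hz⟩
    exact Finset.mem_image.mpr
      ⟨(a, b), Finset.mem_filter.mpr ⟨Finset.mem_product.mpr ⟨h1, h2⟩, hne, hd⟩, hz⟩

lemma skel_edgeSet {V : Type*} [DecidableEq V] [Nonempty V] (H : Finset (Finset V)) :
    ∀ z : Sym2 V, z ∈ (skel H).edgeSet ↔ z ∈ H.biUnion pairsOf := by
  intro z
  refine Sym2.inductionOn z ?_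
  intro a b
  rw [SimpleGraph.mem_edgeSet]
  constructor
  · rintro ⟨hne, e, he, ha, hb, hd⟩
    exact Finset.mem_biUnion.mpr ⟨e, he, mem_pairsOf.mpr ⟨a, b, ha, hb, hne, hd, rfl⟩⟩
  · intro h
    obtain ⟨e, he, hz⟩ := Finset.mem_biUnion.mp h
    obtain ⟨x, y, hx, hy, hne, hd, hz'⟩ := mem_pairsOf.mp hz
    rcases Sym2.eq_iff.mp hz' with ⟨rfl, rfl⟩ | ⟨rfl, rfl⟩
    · exact ⟨hne, e, he, hx, hy, hd⟩
    · exact ⟨hne.symm, e, he, hy, hx, by tauto⟩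

lemma pairsOf_card_two {V : Type*} [DecidableEq V] [Nonempty V] {e : Finset V}
    (hc : e.card = 2) : (pairsOf e).card = 1 := by
  obtain ⟨a, b, hab, rfl⟩ := Finset.card_eq_two.mp hc
  have heq : pairsOf ({a, b} : Finset V) = {s(a, b)} := by
    ext z
    rw [mem_pairsOf, Finset.mem_singleton]
    constructor
    · rintro ⟨x, y, hx, hy, hne, hd, rfl⟩
      simp only [Finset.mem_insert, Finset.mem_singleton] at hx hy
      rcases hx with rfl | rfl <;> rcases hy with rfl | rfl
      · exact (hne rfl).elim
      · rfl
      · exact Sym2.eq_swap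
      · exact (hne rfl).elim
    · rintro rfl
      exact ⟨a, b, by simp, by simp, hab, Or.inl (le_of_eq hc), rfl⟩
  rw [heq, Finset.card_singleton]

lemma sym2_pair_card {V : Type*} [DecidableEq V] {x y z : V} (hyz : y ≠ z) :
    ({s(x, y), s(x, z)} : Finset (Sym2 V)).card = 2 := by
  rw [Finset.card_insert_of_notMem, Finset.card_singleton]
  simp only [Finset.mem_singleton, Sym2.eq_iff]
  rintro (⟨-, h⟩ | ⟨h1, h2⟩)
  · exact hyz h
  · exact hyz (h2.trans h1)

lemma pairsOf_card_three_aux {V : Type*} [DecidableEq V] [Nonempty V] {a b c : V}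
    (hab : a ≠ b) (hac : a ≠ c) (hbc : b ≠ c) (hm : midv ({a, b, c} : Finset V) = a) :
    pairsOf ({a, b, c} : Finset V) = {s(a, b), s(a, c)} := by
  have hcard : ({a, b, c} : Finset V).card = 3 := by
    rw [Finset.card_insert_of_notMem (by simp [hab, hac]),
      Finset.card_insert_of_notMem (by simp [hbc]), Finset.card_singleton]
  ext z
  rw [mem_pairsOf]
  simp only [Finset.mem_insert, Finset.mem_singleton]
  constructor
  · rintro ⟨x, y, hx, hy, hne, hd, rfl⟩
    rcases hd with h | h | h
    · omega
    · have hx' : x = a := by rw [← hm, h]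
      subst hx'
      rcases hy with rfl | rfl | rfl
      · exact (hne rfl).elim
      · exact Or.inl rfl
      · exact Or.inr rfl
    · have hy' : y = a := by rw [← hm, h]
      subst hy'
      rcases hx with rfl | rfl | rfl
      · exact (hne rfl).elim
      · exact Or.inl Sym2.eq_swap
      · exact Or.inr Sym2.eq_swap
  · rintro (rfl | rfl)
    · exact ⟨a, b, by simp, by simp, hab, Or.inr (Or.inl hm), rfl⟩
    · exact ⟨a, c, by simp, by simp, hac, Or.inr (Or.inl hm), rfl⟩

lemma pairsOf_card_three {V : Type*} [DecidableEq V] [Nonempty V] {e : Finset V}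
    (hc : e.card = 3) : (pairsOf e).card = 2 := by
  obtain ⟨a, b, c, hab, hac, hbc, rfl⟩ := Finset.card_eq_three.mp hc
  have hm : midv ({a, b, c} : Finset V) ∈ ({a, b, c} : Finset V) :=
    midv_mem ⟨a, by simp⟩
  simp only [Finset.mem_insert, Finset.mem_singleton] at hm
  rcases hm with h | h | h
  · rw [pairsOf_card_three_aux hab hac hbc h]
    exact sym2_pair_card hbc
  · have hswap : ({a, b, c} : Finset V) = {b, a, c} := by
      ext x; simp only [Finset.mem_insert, Finset.mem_singleton]; tauto
    rw [hswap] at h ⊢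
    rw [pairsOf_card_three_aux hab.symm hbc hac h]
    exact sym2_pair_card hac
  · have hswap : ({a, b, c} : Finset V) = {c, a, b} := by
      ext x; simp only [Finset.mem_insert, Finset.mem_singleton]; tauto
    rw [hswap] at h ⊢
    rw [pairsOf_card_three_aux hac.symm hbc.symm hab h]
    exact sym2_pair_card hab

end BergeAux

/-- A connected `n`-vertex `{2,3}`-uniform linear hypergraph with no Berge cycle of
any length has at most `3(n-1)/2` edges in its two-shadow. -/
theorem shadow_bound_of_berge_cycle_free {V : Type*} [Fintype V] [DecidableEq V]
    (H : Finset (Finset V))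
    (hunif : ∀ e ∈ H, e.card = 2 ∨ e.card = 3)
    (hlin : IsLinear H)
    (hconn : (shadowGraph H).Connected)
    (hforb : ∀ ℓ : ℕ, ¬ HasBergeCycle H ℓ) :
    2 * shadowEdgeCount H ≤ 3 * (Fintype.card V - 1) := by
  classical
  haveI : Nonempty V := hconn.nonempty
  letI : DecidableRel (skel H).Adj := fun a b => Classical.dec _
  have htree : (skel H).IsTree := ⟨skel_connected H hunif hconn, skel_acyclic H hunif hforb⟩
  have hcount := htree.card_edgeFinset
  have hEF : (skel H).edgeFinset = H.biUnion pairsOf := by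
    ext z
    rw [SimpleGraph.mem_edgeFinset]
    exact skel_edgeSet H z
  have hdisj : ∀ e₁ ∈ H, ∀ e₂ ∈ H, e₁ ≠ e₂ → Disjoint (pairsOf e₁) (pairsOf e₂) := by
    intro e₁ h1 e₂ h2 hne
    rw [Finset.disjoint_left]
    intro z hz1 hz2
    obtain ⟨x, y, hx, hy, hxy, -, hz⟩ := mem_pairsOf.mp hz1
    obtain ⟨x', y', hx', hy', hxy', -, hz'⟩ := mem_pairsOf.mp hz2
    have hx2 : x ∈ e₂ ∧ y ∈ e₂ := by
      rcases Sym2.eq_iff.mp (hz'.trans hz.symm) with ⟨rfl, rfl⟩ | ⟨rfl, rfl⟩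
      · exact ⟨hx', hy'⟩
      · exact ⟨hy', hx'⟩
    have hsub : ({x, y} : Finset V) ⊆ e₁ ∩ e₂ := by
      intro w hw
      rcases Finset.mem_insert.mp hw with rfl | hw'
      · exact Finset.mem_inter.mpr ⟨hx, hx2.1⟩
      · rw [Finset.mem_singleton.mp hw']
        exact Finset.mem_inter.mpr ⟨hy, hx2.2⟩
    have hc2 : ({x, y} : Finset V).card = 2 := by
      rw [Finset.card_insert_of_notMem (by simp [hxy]), Finset.card_singleton]
    have := Finset.card_le_card hsub
    have := hlin e₁ h1 e₂ h2 hne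
    omega
  have hsum : (H.biUnion pairsOf).card = ∑ e ∈ H, (pairsOf e).card :=
    Finset.card_biUnion hdisj
  have hcards : ∀ e ∈ H, (pairsOf e).card = e.card - 1 := by
    intro e he
    rcases hunif e he with hc | hc
    · rw [pairsOf_card_two hc, hc]
    · rw [pairsOf_card_three hc, hc]
  have hEq : ∑ e ∈ H, (e.card - 1) = Fintype.card V - 1 := by
    rw [hEF, hsum] at hcount
    rw [← Finset.sum_congr rfl hcards]
    omega
  have hdisj2 : ∀ e₁ ∈ H, ∀ e₂ ∈ H, e₁ ≠ e₂ →
      Disjoint (e₁.powersetCard 2) (e₂.powersetCard 2) := by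
    intro e₁ h1 e₂ h2 hne
    rw [Finset.disjoint_left]
    intro p hp1 hp2
    obtain ⟨hs1, hc1⟩ := Finset.mem_powersetCard.mp hp1
    obtain ⟨hs2, hc2⟩ := Finset.mem_powersetCard.mp hp2
    have hsub : p ⊆ e₁ ∩ e₂ := fun w hw => Finset.mem_inter.mpr ⟨hs1 hw, hs2 hw⟩
    have := Finset.card_le_card hsub
    have := hlin e₁ h1 e₂ h2 hne
    omega
  have hshadow : shadowEdgeCount H = ∑ e ∈ H, (e.card).choose 2 := by
    rw [shadowEdgeCount, Finset.card_biUnion hdisj2]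
    exact Finset.sum_congr rfl fun e _ => Finset.card_powersetCard 2 e
  have hpoint : ∀ e ∈ H, 2 * (e.card).choose 2 ≤ 3 * (e.card - 1) := by
    intro e he
    rcases hunif e he with hc | hc <;> rw [hc] <;> norm_num
  calc 2 * shadowEdgeCount H = ∑ e ∈ H, 2 * (e.card).choose 2 := by
        rw [hshadow, Finset.mul_sum]
    _ ≤ ∑ e ∈ H, 3 * (e.card - 1) := Finset.sum_le_sum hpoint
    _ = 3 * ∑ e ∈ H, (e.card - 1) := by rw [Finset.mul_sum]
    _ = 3 * (Fintype.card V - 1) := by rw [hEq]
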